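/- Let γ : ℝ → ℝ² be a smooth closed unit-speed curve with period ℓ, and define F(x₀, t₀) = (4πt₀)^{−1/2} ∫₀^ℓ e^{−|γ(t)−x₀|²/(4t₀)} dt for x₀ ∈ ℝ² and t₀ > 0, and λ(γ) = sup over x₀, t₀ of F(x₀,t₀). Then for every x₀ ∈ ℝ² and t₀ > 0, the partial derivative ∂F/∂t₀ (x₀, t₀) satisfies ∂F/∂t₀ (x₀, t₀) ≥ −(λ(γ)/4) · sup_t H(t)². -/

import Mathlib

noncomputable section
open Real MeasureTheory
open scoped RealInnerProductSpace

abbrev E2 := EuclideanSpace ℝ (Fin 2)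

/-- The unit normal of a unit-speed plane curve: `γ′` rotated by `−π/2`. -/
def normal (γ : ℝ → E2) (t : ℝ) : E2 := WithLp.toLp 2 ![deriv γ t 1, -(deriv γ t 0)]

/-- The curvature `H = −⟨γ″, n⟩` of a unit-speed plane curve. -/
def curv (γ : ℝ → E2) (t : ℝ) : ℝ := -⟪deriv (deriv γ) t, normal γ t⟫

/-- The Gaussian weighted length functional `F_{x₀,t₀}` of a closed curve of period `ℓ`. -/
def Fcur (γ : ℝ → E2) (ℓ : ℝ) (x₀ : E2) (t₀ : ℝ) : ℝ :=
  (4 * π * t₀) ^ (-(1:ℝ)/2) * ∫ t in (0:ℝ)..ℓ, Real.exp (-‖γ t - x₀‖ ^ 2 / (4 * t₀))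

/-- The entropy `λ(γ) = sup_{x₀,t₀} F_{x₀,t₀}(γ)` of a closed curve of period `ℓ`. -/
def entCur (γ : ℝ → E2) (ℓ : ℝ) : ℝ :=
  sSup {a : ℝ | ∃ x₀ : E2, ∃ t₀ : ℝ, 0 < t₀ ∧ a = Fcur γ ℓ x₀ t₀}


/- ### Auxiliary lemmas -/

section Aux

variable {γ : ℝ → E2}

lemma inner2 (v w : E2) : ⟪v, w⟫ = v 0 * w 0 + v 1 * w 1 := by
  simp [PiLp.inner_apply, RCLike.inner_apply, Fin.sum_univ_two, mul_comm]

lemma normsq2 (v : E2) : ‖v‖ ^ 2 = v 0 ^ 2 + v 1 ^ 2 := by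
  rw [← real_inner_self_eq_norm_sq, inner2]; ring

lemma normal0 (γ : ℝ → E2) (t : ℝ) : normal γ t 0 = deriv γ t 1 := rfl
lemma normal1 (γ : ℝ → E2) (t : ℝ) : normal γ t 1 = -(deriv γ t 0) := rfl

lemma pythag (γ : ℝ → E2) (t : ℝ) (hunit : ‖deriv γ t‖ = 1) (v : E2) :
    ⟪v, deriv γ t⟫ ^ 2 + ⟪v, normal γ t⟫ ^ 2 = ‖v‖ ^ 2 := by
  have h : deriv γ t 0 ^ 2 + deriv γ t 1 ^ 2 = 1 := by
    rw [← normsq2, hunit]; norm_num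
  rw [inner2, inner2, normsq2, normal0, normal1]
  linear_combination (v 0 ^ 2 + v 1 ^ 2) * h

lemma inner_A (γ : ℝ → E2) (t : ℝ) (hunit : ‖deriv γ t‖ = 1)
    (horth : ⟪deriv (deriv γ) t, deriv γ t⟫ = 0) (v : E2) :
    ⟪v, deriv (deriv γ) t⟫ = -(curv γ t) * ⟪v, normal γ t⟫ := by
  have h0 : deriv (deriv γ) t 0 * deriv γ t 0 + deriv (deriv γ) t 1 * deriv γ t 1 = 0 := by
    rw [← inner2]; exact horth
  have h1 : deriv γ t 0 ^ 2 + deriv γ t 1 ^ 2 = 1 := by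
    rw [← normsq2, hunit]; norm_num
  rw [curv, inner2, inner2, inner2]
  simp only [normal0, normal1]
  linear_combination (v 0 * deriv γ t 0 + v 1 * deriv γ t 1) * h0 -
    (v 0 * deriv (deriv γ) t 0 + v 1 * deriv (deriv γ) t 1) * h1

lemma hD (hγ : ContDiff ℝ (⊤ : ℕ∞) γ) (t : ℝ) : HasDerivAt γ (deriv γ t) t :=
  ((hγ.differentiable (by simp)) t).hasDerivAt

lemma contD (hγ : ContDiff ℝ (⊤ : ℕ∞) γ) : ContDiff ℝ (⊤ : ℕ∞) (deriv γ) :=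
  (contDiff_infty_iff_deriv.mp (by exact_mod_cast hγ)).2 |>.of_le (by exact_mod_cast le_top)

lemma hD2 (hγ : ContDiff ℝ (⊤ : ℕ∞) γ) (t : ℝ) : HasDerivAt (deriv γ) (deriv (deriv γ) t) t :=
  hD (contD hγ) t

lemma inner_AT (hγ : ContDiff ℝ (⊤ : ℕ∞) γ) (hunit : ∀ t, ‖deriv γ t‖ = 1) (t : ℝ) :
    ⟪deriv (deriv γ) t, deriv γ t⟫ = 0 := by
  have h : ∀ s, ⟪deriv γ s, deriv γ s⟫ = (1:ℝ) := by
    intro s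
    rw [real_inner_self_eq_norm_sq, hunit]; norm_num
  have hd : HasDerivAt (fun s => ⟪deriv γ s, deriv γ s⟫)
      (⟪deriv γ t, deriv (deriv γ) t⟫ + ⟪deriv (deriv γ) t, deriv γ t⟫) t :=
    (hD2 hγ t).inner ℝ (hD2 hγ t)
  have hz : HasDerivAt (fun s => ⟪deriv γ s, deriv γ s⟫) 0 t := by
    have : (fun s => ⟪deriv γ s, deriv γ s⟫) = fun _ => (1:ℝ) := funext h
    rw [this]; exact hasDerivAt_const t 1
  have := hd.unique hz
  rw [real_inner_comm (deriv γ t) (deriv (deriv γ) t)] at this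
  rw [real_inner_comm (deriv γ t) (deriv (deriv γ) t)]
  linarith

lemma periodic_deriv {ℓ : ℝ} (hper : ∀ t, γ (t + ℓ) = γ t) (t : ℝ) :
    deriv γ (t + ℓ) = deriv γ t := by
  rw [← deriv_comp_add_const γ ℓ]
  congr 1; funext s; exact hper s

lemma periodic_reduce {X : Type*} {f : ℝ → X} {ℓ : ℝ} (hℓ : 0 < ℓ)
    (hper : ∀ t, f (t + ℓ) = f t) (t : ℝ) : ∃ s ∈ Set.Icc 0 ℓ, f t = f s := by
  obtain ⟨s, hs, hfs⟩ := (Function.Periodic.exists_mem_Ico₀ hper hℓ t)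
  exact ⟨s, ⟨hs.1, hs.2.le⟩, hfs⟩

lemma periodic_bound {f : ℝ → ℝ} {ℓ : ℝ} (hℓ : 0 < ℓ) (hcont : Continuous f)
    (hper : ∀ t, f (t + ℓ) = f t) : ∃ M, ∀ t, f t ≤ M := by
  obtain ⟨z, hz, hmax⟩ := (isCompact_Icc (a := (0:ℝ)) (b := ℓ)).exists_isMaxOn
    (Set.nonempty_Icc.mpr hℓ.le) hcont.continuousOn
  refine ⟨f z, fun t => ?_⟩
  obtain ⟨s, hs, hfs⟩ := periodic_reduce hℓ hper t
  rw [hfs]; exact hmax hs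

lemma graphical (hγ : ContDiff ℝ (⊤ : ℕ∞) γ) (hunit : ∀ t, ‖deriv γ t‖ = 1)
    {K : ℝ} (hK : 0 < K) (hbnd : ∀ u, ‖deriv (deriv γ) u‖ ≤ K)
    {s t : ℝ} (hst : s ≤ t) (hle : t - s ≤ 1 / K) : (t - s) / 2 ≤ ‖γ t - γ s‖ := by
  have hdiff : Differentiable ℝ (deriv γ) := (contD hγ).differentiable (by simp)
  have lip : LipschitzWith ⟨K, hK.le⟩ (deriv γ) := by
    apply lipschitzWith_of_nnnorm_deriv_le hdiff
    intro x
    exact_mod_cast hbnd x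
  have hTd : ∀ u v : ℝ, ‖deriv γ u - deriv γ v‖ ≤ K * |u - v| := by
    intro u v
    have := lip.dist_le_mul u v
    rw [dist_eq_norm, Real.dist_eq] at this; exact this
  have hlow : ∀ u ∈ Set.Icc s t, (1:ℝ)/2 ≤ ⟪deriv γ u, deriv γ s⟫ := by
    intro u hu
    have h1 : ‖deriv γ u - deriv γ s‖ ≤ 1 := by
      have h2 := hTd u s
      have h3 : |u - s| ≤ 1 / K := by
        rw [abs_of_nonneg (by linarith [hu.1])]; linarith [hu.2]
      calc ‖deriv γ u - deriv γ s‖ ≤ K * |u - s| := h2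
        _ ≤ K * (1/K) := by nlinarith
        _ = 1 := by field_simp
    have h4 : ‖deriv γ u - deriv γ s‖^2 = 2 - 2 * ⟪deriv γ u, deriv γ s⟫ := by
      rw [norm_sub_sq_real, hunit, hunit]; ring
    nlinarith [sq_nonneg (‖deriv γ u - deriv γ s‖), norm_nonneg (deriv γ u - deriv γ s)]
  have hψ : ∀ u, HasDerivAt (fun w => ⟪γ w - γ s, deriv γ s⟫) (⟪deriv γ u, deriv γ s⟫) u := by
    intro u
    have := ((hD hγ u).sub_const (γ s)).inner ℝ (hasDerivAt_const u (deriv γ s))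
    simpa using this
  have hcont : Continuous fun u => ⟪deriv γ u, deriv γ s⟫ :=
    ((contD hγ).continuous.inner continuous_const)
  have hFTC : ∫ u in s..t, ⟪deriv γ u, deriv γ s⟫ = ⟪γ t - γ s, deriv γ s⟫ := by
    have := intervalIntegral.integral_eq_sub_of_hasDerivAt
      (f := fun w => ⟪γ w - γ s, deriv γ s⟫) (fun u _ => hψ u)
      (hcont.intervalIntegrable s t)
    simpa using this
  have hmono : (t - s)/2 ≤ ∫ u in s..t, ⟪deriv γ u, deriv γ s⟫ := by
    have h5 : ∫ u in s..t, (1:ℝ)/2 = (t - s)/2 := by simp; ring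
    rw [← h5]
    apply intervalIntegral.integral_mono_on hst
      (intervalIntegrable_const) (hcont.intervalIntegrable s t)
    exact hlow
  calc (t-s)/2 ≤ ⟪γ t - γ s, deriv γ s⟫ := by rw [← hFTC]; exact hmono
    _ ≤ ‖γ t - γ s‖ * ‖deriv γ s‖ := real_inner_le_norm _ _
    _ = ‖γ t - γ s‖ := by rw [hunit]; ring

lemma xexp_le {x : ℝ} (hx : 0 ≤ x) : x * Real.exp (-x^2) ≤ 1 := by
  have h1 : x ≤ Real.exp (x^2) := by
    have := Real.add_one_le_exp (x^2)
    nlinarith [sq_nonneg (x - 1)]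
  rw [Real.exp_neg]
  rw [mul_inv_le_iff₀' (Real.exp_pos _)]
  simpa using h1

lemma m_exp {t₀ m : ℝ} (ht₀ : 0 < t₀) (hm : 0 ≤ m) :
    m * Real.exp (-m^2/(4*t₀)) ≤ 2 * Real.sqrt t₀ := by
  have hs : 0 < Real.sqrt t₀ := Real.sqrt_pos.mpr ht₀
  set y := m / (2 * Real.sqrt t₀) with hy
  have hy0 : 0 ≤ y := div_nonneg hm (by positivity)
  have hm' : m = 2 * Real.sqrt t₀ * y := by rw [hy]; field_simp
  have hsq : Real.sqrt t₀ ^ 2 = t₀ := Real.sq_sqrt ht₀.le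
  have he : -m^2/(4*t₀) = -y^2 := by
    rw [hm']; field_simp; nlinarith [hsq]
  rw [he, hm']
  have := xexp_le hy0
  nlinarith [Real.exp_pos (-y^2)]

lemma gauss_shift {b t₁ : ℝ} (hb : 0 < b) :
    (∫ t : ℝ, Real.exp (-(b * (t - t₁)^2))) = Real.sqrt (π / b) := by
  rw [← integral_gaussian b]
  simp only [neg_mul] at *
  exact integral_sub_right_eq_self (μ := volume) (fun x => Real.exp (-(b * x^2))) t₁

lemma gauss_integrable {b t₁ : ℝ} (hb : 0 < b) :
    MeasureTheory.Integrable (fun t : ℝ => Real.exp (-(b * (t - t₁)^2))) := by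
  have h := integrable_exp_neg_mul_sq hb
  simpa [neg_mul] using h.comp_sub_right t₁

end Aux

section Aux2
open Metric
variable {γ : ℝ → E2}

lemma perinterval (hγ : ContDiff ℝ (⊤ : ℕ∞) γ) (hunit : ∀ t, ‖deriv γ t‖ = 1)
    {K : ℝ} (hK : 0 < K) (hbnd : ∀ u, ‖deriv (deriv γ) u‖ ≤ K)
    (x₀ : E2) {t₀ : ℝ} (ht₀ : 0 < t₀) {c h : ℝ} (hh : 0 ≤ h) (hh2 : h ≤ 1/K) :
    (∫ t in c..c+h, Real.exp (-‖γ t - x₀‖^2/(4*t₀))) ≤ 32 * Real.sqrt t₀ := by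
  have hcr : Continuous fun t => ‖γ t - x₀‖ :=
    ((hγ.continuous).sub continuous_const).norm
  have hcf : Continuous fun t => Real.exp (-‖γ t - x₀‖^2/(4*t₀)) := by fun_prop
  obtain ⟨t₁, ht₁, hmin⟩ := (isCompact_Icc (a := c) (b := c+h)).exists_isMinOn
    (Set.nonempty_Icc.mpr (by linarith)) hcr.continuousOn
  set m := ‖γ t₁ - x₀‖ with hm
  have hm0 : 0 ≤ m := norm_nonneg _
  set g₁ : ℝ → ℝ := (Set.Icc (t₁ - 4*m) (t₁+4*m)).indicator
      (fun _ => Real.exp (-m^2/(4*t₀))) with hg₁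
  set g₂ : ℝ → ℝ := fun t => Real.exp (-((64*t₀)⁻¹ * (t - t₁)^2)) with hg₂
  have hb : (0:ℝ) < (64*t₀)⁻¹ := by positivity
  -- pointwise bound on Icc
  have hpt : ∀ t ∈ Set.Icc c (c+h),
      Real.exp (-‖γ t - x₀‖^2/(4*t₀)) ≤ g₁ t + g₂ t := by
    intro t ht
    by_cases hcase : |t - t₁| ≤ 4*m
    · have hind : g₁ t = Real.exp (-m^2/(4*t₀)) := by
        rw [hg₁, Set.indicator_of_mem]
        rw [Set.mem_Icc]
        exact ⟨by linarith [(abs_le.mp hcase).1], by linarith [(abs_le.mp hcase).2]⟩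
      have h1 : m ≤ ‖γ t - x₀‖ := hmin ht
      have hneg : -‖γ t - x₀‖^2 ≤ -m^2 := by nlinarith
      have hexp : Real.exp (-‖γ t - x₀‖^2/(4*t₀)) ≤ Real.exp (-m^2/(4*t₀)) :=
        Real.exp_le_exp.mpr (by apply div_le_div_of_nonneg_right hneg (by positivity) |>.trans_eq rfl)
      have hg₂0 : 0 ≤ g₂ t := le_of_lt (Real.exp_pos _)
      rw [hind]; linarith
    · push_neg at hcase
      have hind : g₁ t = 0 := by
        rw [hg₁, Set.indicator_of_notMem]
        rw [Set.mem_Icc]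
        rintro ⟨h1, h2⟩
        exact absurd (abs_le.mpr ⟨by linarith, by linarith⟩) (not_le.mpr hcase)
      have hdist : |t - t₁| / 2 ≤ ‖γ t - γ t₁‖ := by
        rcases le_total t₁ t with hle | hle
        · have := graphical hγ hunit hK hbnd hle (by
            have : t - t₁ ≤ h := by linarith [ht.1, ht.2, ht₁.1, ht₁.2]
            linarith)
          rwa [abs_of_nonneg (by linarith)]
        · have := graphical hγ hunit hK hbnd hle (by
            have : t₁ - t ≤ h := by linarith [ht.1, ht.2, ht₁.1, ht₁.2]
            linarith)
          rw [abs_of_nonpos (by linarith), ← norm_sub_rev]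
          simpa using this
      have hr : |t - t₁|/4 ≤ ‖γ t - x₀‖ := by
        have htri : ‖γ t - γ t₁‖ ≤ ‖γ t - x₀‖ + ‖γ t₁ - x₀‖ := by
          have h5 := norm_sub_le (γ t - x₀) (γ t₁ - x₀)
          have h6 : γ t - x₀ - (γ t₁ - x₀) = γ t - γ t₁ := by abel
          rwa [h6] at h5
        linarith
      have h2 : (t - t₁)^2/16 ≤ ‖γ t - x₀‖^2 := by
        nlinarith [hr, abs_nonneg (t - t₁), sq_abs (t - t₁), norm_nonneg (γ t - x₀)]
      have h3 : (64*t₀)⁻¹ * (t - t₁)^2 ≤ ‖γ t - x₀‖^2/(4*t₀) := by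
        have e : (64*t₀)⁻¹ * (t - t₁)^2 = ((t - t₁)^2/16)/(4*t₀) := by
          rw [mul_comm (64:ℝ) t₀, mul_inv, div_div]
          rw [div_eq_mul_inv, mul_comm (16:ℝ) (4*t₀), mul_inv, mul_inv]
          ring
        rw [e]
        exact div_le_div_of_nonneg_right h2 (by positivity) |>.trans_eq rfl
      have hexp : Real.exp (-‖γ t - x₀‖^2/(4*t₀)) ≤ g₂ t := by
        rw [hg₂]
        exact Real.exp_le_exp.mpr (by rw [neg_div]; linarith)
      rw [hind]; linarith
  -- now integrate
  have hc2 : c ≤ c + h := by linarith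
  have hg₁int : MeasureTheory.Integrable g₁ := by
    rw [hg₁]
    exact (integrable_indicator_iff measurableSet_Icc).mpr
      (integrableOn_const measure_Icc_lt_top.ne)
  have hg₂int : MeasureTheory.Integrable g₂ := by rw [hg₂]; exact gauss_integrable hb
  have hfint : IntegrableOn (fun t => Real.exp (-‖γ t - x₀‖^2/(4*t₀))) (Set.Ioc c (c+h)) :=
    hcf.integrableOn_Ioc
  have hg₁0 : ∀ t, 0 ≤ g₁ t := fun t => Set.indicator_nonneg (fun _ _ => (Real.exp_pos _).le) t
  have hg₂0 : ∀ t, 0 ≤ g₂ t := fun t => (Real.exp_pos _).le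
  rw [intervalIntegral.integral_of_le hc2]
  have step1 : (∫ t in Set.Ioc c (c+h), Real.exp (-‖γ t - x₀‖^2/(4*t₀)))
      ≤ ∫ t in Set.Ioc c (c+h), (g₁ t + g₂ t) := by
    apply setIntegral_mono_on hfint ((hg₁int.add hg₂int).integrableOn) measurableSet_Ioc
    exact fun t ht => hpt t (Set.Ioc_subset_Icc_self ht)
  have step2 : (∫ t in Set.Ioc c (c+h), (g₁ t + g₂ t))
      = (∫ t in Set.Ioc c (c+h), g₁ t) + ∫ t in Set.Ioc c (c+h), g₂ t :=
    integral_add hg₁int.integrableOn hg₂int.integrableOn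
  have step3 : (∫ t in Set.Ioc c (c+h), g₁ t) ≤ ∫ t, g₁ t :=
    setIntegral_le_integral hg₁int (Filter.Eventually.of_forall hg₁0)
  have step4 : (∫ t in Set.Ioc c (c+h), g₂ t) ≤ ∫ t, g₂ t :=
    setIntegral_le_integral hg₂int (Filter.Eventually.of_forall hg₂0)
  have hI1 : (∫ t, g₁ t) ≤ 16 * Real.sqrt t₀ := by
    rw [hg₁, integral_indicator_const _ measurableSet_Icc]
    have hvol : (volume (Set.Icc (t₁ - 4*m) (t₁ + 4*m))).toReal = 8*m := by
      rw [Real.volume_Icc, ENNReal.toReal_ofReal (by linarith)]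
      ring
    rw [measureReal_def, hvol, smul_eq_mul]
    have := m_exp ht₀ hm0
    nlinarith [Real.sqrt_nonneg t₀]
  have hI2 : (∫ t, g₂ t) ≤ 16 * Real.sqrt t₀ := by
    rw [hg₂, gauss_shift hb]
    have h64 : π / (64*t₀)⁻¹ = 64 * π * t₀ := by
      rw [div_inv_eq_mul]; ring
    rw [h64]
    have hle : 64 * π * t₀ ≤ 256 * t₀ := by nlinarith [Real.pi_le_four]
    calc Real.sqrt (64 * π * t₀) ≤ Real.sqrt (256 * t₀) := Real.sqrt_le_sqrt hle
      _ = 16 * Real.sqrt t₀ := by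
          rw [Real.sqrt_mul (by norm_num : (0:ℝ) ≤ 256)]
          rw [show (256:ℝ) = 16^2 by norm_num, Real.sqrt_sq (by norm_num)]
  linarith

lemma Fcur_bound (hγ : ContDiff ℝ (⊤ : ℕ∞) γ) (hunit : ∀ t, ‖deriv γ t‖ = 1)
    {K ℓ : ℝ} (hK : 0 < K) (hbnd : ∀ u, ‖deriv (deriv γ) u‖ ≤ K) (hℓ : 0 < ℓ)
    (x₀ : E2) {t₀ : ℝ} (ht₀ : 0 < t₀) :
    Fcur γ ℓ x₀ t₀ ≤ 32 * (Nat.ceil (ℓ * K) : ℝ) := by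
  have hcf : Continuous fun t => Real.exp (-‖γ t - x₀‖^2/(4*t₀)) := by
    have : Continuous fun t => ‖γ t - x₀‖ := ((hγ.continuous).sub continuous_const).norm
    fun_prop
  set N := Nat.ceil (ℓ * K) with hN
  have hN0 : 0 < N := Nat.ceil_pos.mpr (by positivity)
  have hNR : (0:ℝ) < N := by exact_mod_cast hN0
  set h : ℝ := ℓ / N with hh
  have hh0 : 0 ≤ h := by positivity
  have hhK : h ≤ 1 / K := by
    rw [hh, div_le_div_iff₀ hNR hK]
    calc ℓ * K ≤ (N : ℝ) := Nat.le_ceil (ℓ * K)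
      _ = 1 * N := (one_mul _).symm
  set a : ℕ → ℝ := fun j => j * h with ha
  have hsum : ∑ k ∈ Finset.range N, (∫ t in a k..a (k+1),
        Real.exp (-‖γ t - x₀‖^2/(4*t₀)))
      = ∫ t in (a 0)..(a N), Real.exp (-‖γ t - x₀‖^2/(4*t₀)) :=
    intervalIntegral.sum_integral_adjacent_intervals
      (fun k _ => hcf.intervalIntegrable _ _)
  have ha0 : a 0 = 0 := by simp [ha]
  have haN : a N = ℓ := by
    rw [ha, hh]; field_simp
  have heach : ∀ k, (∫ t in a k..a (k+1), Real.exp (-‖γ t - x₀‖^2/(4*t₀)))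
      ≤ 32 * Real.sqrt t₀ := by
    intro k
    have hak : a (k+1) = a k + h := by rw [ha]; push_cast; ring
    rw [hak]
    exact perinterval hγ hunit hK hbnd x₀ ht₀ hh0 hhK
  have hInt : (∫ t in (0:ℝ)..ℓ, Real.exp (-‖γ t - x₀‖^2/(4*t₀)))
      ≤ N * (32 * Real.sqrt t₀) := by
    rw [← ha0, ← haN, ← hsum]
    calc ∑ k ∈ Finset.range N, (∫ t in a k..a (k+1), Real.exp (-‖γ t - x₀‖^2/(4*t₀)))
        ≤ ∑ k ∈ Finset.range N, (32 * Real.sqrt t₀) :=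
          Finset.sum_le_sum (fun k _ => heach k)
      _ = N * (32 * Real.sqrt t₀) := by rw [Finset.sum_const, Finset.card_range]; simp [nsmul_eq_mul]
  have hP : (0:ℝ) < (4 * π * t₀) ^ (-(1:ℝ)/2) :=
    Real.rpow_pos_of_pos (by positivity) _
  have hPs : (4 * π * t₀) ^ (-(1:ℝ)/2) * Real.sqrt t₀ ≤ 1 := by
    have h1 : (4 * π * t₀ : ℝ) ^ (-(1:ℝ)/2) = (Real.sqrt (4 * π * t₀))⁻¹ := by
      rw [show (-(1:ℝ)/2) = -(1/2) by norm_num, Real.rpow_neg (by positivity),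
        Real.sqrt_eq_rpow]
    rw [h1]
    rw [inv_mul_le_iff₀ (Real.sqrt_pos.mpr (by positivity))]
    have : t₀ ≤ 4 * π * t₀ := by nlinarith [Real.pi_gt_three]
    calc Real.sqrt t₀ ≤ Real.sqrt (4 * π * t₀) := Real.sqrt_le_sqrt this
      _ = Real.sqrt (4*π*t₀) * 1 := by ring
  have hexp : Fcur γ ℓ x₀ t₀ ≤ (4 * π * t₀) ^ (-(1:ℝ)/2) * (N * (32 * Real.sqrt t₀)) := by
    rw [Fcur]
    exact mul_le_mul_of_nonneg_left hInt hP.le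
  calc Fcur γ ℓ x₀ t₀ ≤ (4 * π * t₀) ^ (-(1:ℝ)/2) * (N * (32 * Real.sqrt t₀)) := hexp
    _ = 32 * N * ((4 * π * t₀) ^ (-(1:ℝ)/2) * Real.sqrt t₀) := by ring
    _ ≤ 32 * N * 1 := by
        apply mul_le_mul_of_nonneg_left hPs (by positivity)
    _ = 32 * N := by ring

lemma curv_eq (t : ℝ) : curv γ t =
    -(deriv (deriv γ) t 0 * deriv γ t 1 - deriv (deriv γ) t 1 * deriv γ t 0) := by
  rw [curv, inner2]
  have h0 : normal γ t 0 = deriv γ t 1 := rfl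
  have h1 : normal γ t 1 = -(deriv γ t 0) := rfl
  rw [h0, h1]; ring

lemma cont_comp (hγ : ContDiff ℝ (⊤ : ℕ∞) γ) (i : Fin 2) : Continuous fun t => γ t i :=
  (continuous_apply i).comp ((PiLp.continuous_ofLp (p := 2) (β := fun _ : Fin 2 => ℝ)).comp hγ.continuous)

lemma cont_curv (hγ : ContDiff ℝ (⊤ : ℕ∞) γ) : Continuous (curv γ) := by
  have e : curv γ = fun t =>
      -(deriv (deriv γ) t 0 * deriv γ t 1 - deriv (deriv γ) t 1 * deriv γ t 0) :=
    funext fun t => curv_eq t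
  rw [e]
  have h1 := cont_comp (contD hγ) (0 : Fin 2)
  have h2 := cont_comp (contD hγ) (1 : Fin 2)
  have h3 := cont_comp (contD (contD hγ)) (0 : Fin 2)
  have h4 := cont_comp (contD (contD hγ)) (1 : Fin 2)
  exact ((h3.mul h2).sub (h4.mul h1)).neg

lemma curv_periodic {ℓ : ℝ} (hper : ∀ t, γ (t + ℓ) = γ t) (t : ℝ) :
    curv γ (t + ℓ) = curv γ t := by
  have h1 : ∀ s, deriv γ (s + ℓ) = deriv γ s := periodic_deriv hper
  have h2 : ∀ s, deriv (deriv γ) (s + ℓ) = deriv (deriv γ) s := periodic_deriv h1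
  rw [curv_eq, curv_eq, h1, h2]

lemma hasDeriv_inner_exp {c x : ℝ} (hc : 0 ≤ c) (hx : 0 < x) :
    HasDerivAt (fun y => Real.exp (-c/(4*y))) (c/(4*x^2) * Real.exp (-c/(4*x))) x := by
  have e : (fun y : ℝ => Real.exp (-c/(4*y))) = fun y => Real.exp ((-c/4) * y⁻¹) := by
    funext y
    congr 1
    rw [← div_div, div_eq_mul_inv]
  rw [e]
  have h1 : HasDerivAt (fun y : ℝ => y⁻¹) (-(x^2)⁻¹) x := hasDerivAt_inv hx.ne'
  have h2 := (h1.const_mul (-c/4)).exp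
  convert h2 using 1
  rw [show (-c/4) * x⁻¹ = -c/(4*x) by field_simp]
  field_simp

lemma hasDeriv_I (hγ : ContDiff ℝ (⊤ : ℕ∞) γ) (x₀ : E2) {t₀ ℓ : ℝ} (ht₀ : 0 < t₀) :
    HasDerivAt (fun s => ∫ t in (0:ℝ)..ℓ, Real.exp (-‖γ t - x₀‖^2/(4*s)))
      (∫ t in (0:ℝ)..ℓ, ‖γ t - x₀‖^2/(4*t₀^2) * Real.exp (-‖γ t - x₀‖^2/(4*t₀))) t₀ := by
  have hcr : Continuous fun t => ‖γ t - x₀‖ := ((hγ.continuous).sub continuous_const).norm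
  obtain ⟨z, hz, hmax⟩ := (isCompact_uIcc (a := (0:ℝ)) (b := ℓ)).exists_isMaxOn
    Set.nonempty_uIcc (hcr.pow 2).continuousOn
  set M := ‖γ z - x₀‖^2 with hM
  have hM0 : 0 ≤ M := sq_nonneg _
  have hbM : ∀ t ∈ Set.uIcc (0:ℝ) ℓ, ‖γ t - x₀‖^2 ≤ M := fun t ht => hmax ht
  have hε : (0:ℝ) < t₀/2 := by linarith
  have key := intervalIntegral.hasDerivAt_integral_of_dominated_loc_of_deriv_le
    (F := fun x t => Real.exp (-‖γ t - x₀‖^2/(4*x)))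
    (F' := fun x t => ‖γ t - x₀‖^2/(4*x^2) * Real.exp (-‖γ t - x₀‖^2/(4*x)))
    (x₀ := t₀) (a := 0) (b := ℓ) (μ := volume) (bound := fun _ => M/t₀^2) (Metric.ball_mem_nhds t₀ hε)
    ?_ ?_ ?_ ?_ ?_ ?_
  · exact key.2
  · apply Filter.Eventually.of_forall
    intro x
    apply Continuous.aestronglyMeasurable
    fun_prop
  · exact (by fun_prop : Continuous fun t => Real.exp (-‖γ t - x₀‖^2/(4*t₀))).intervalIntegrable _ _
  · apply Continuous.aestronglyMeasurable
    have : Continuous fun t => ‖γ t - x₀‖^2/(4*t₀^2) := by fun_prop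
    fun_prop
  · apply Filter.Eventually.of_forall
    intro t ht x hx
    rw [mem_ball, Real.dist_eq, abs_lt] at hx
    have hx0 : t₀/2 < x := by linarith [hx.1]
    have hxpos : 0 < x := by linarith
    have hr2 : ‖γ t - x₀‖^2 ≤ M := hbM t (Set.uIoc_subset_uIcc ht)
    have hx2 : t₀^2 ≤ 4*x^2 := by nlinarith
    have hexp1 : Real.exp (-‖γ t - x₀‖^2/(4*x)) ≤ 1 := by
      rw [Real.exp_le_one_iff]
      have : (0:ℝ) ≤ ‖γ t - x₀‖^2/(4*x) := by positivity
      linarith [neg_div (4*x) (‖γ t - x₀‖^2)]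
    have hnn : (0:ℝ) ≤ ‖γ t - x₀‖^2/(4*x^2) * Real.exp (-‖γ t - x₀‖^2/(4*x)) := by positivity
    rw [Real.norm_eq_abs, abs_of_nonneg hnn]
    have hdiv : ‖γ t - x₀‖^2/(4*x^2) ≤ M/t₀^2 :=
      div_le_div₀ hM0 hr2 (by positivity) hx2
    calc ‖γ t - x₀‖^2/(4*x^2) * Real.exp (-‖γ t - x₀‖^2/(4*x))
        ≤ ‖γ t - x₀‖^2/(4*x^2) * 1 := by
          apply mul_le_mul_of_nonneg_left hexp1 (by positivity)
      _ = ‖γ t - x₀‖^2/(4*x^2) := by ring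
      _ ≤ M/t₀^2 := hdiv
  · exact intervalIntegrable_const
  · apply Filter.Eventually.of_forall
    intro t ht x hx
    rw [mem_ball, Real.dist_eq, abs_lt] at hx
    have hxpos : 0 < x := by linarith [hx.1]
    exact hasDeriv_inner_exp (sq_nonneg _) hxpos

lemma ibp (hγ : ContDiff ℝ (⊤ : ℕ∞) γ) (hunit : ∀ t, ‖deriv γ t‖ = 1)
    {ℓ : ℝ} (hper : ∀ t, γ (t + ℓ) = γ t) (x₀ : E2) {t₀ : ℝ} (ht₀ : 0 < t₀) :
    (∫ t in (0:ℝ)..ℓ, ((1 + ⟪γ t - x₀, deriv (deriv γ) t⟫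
      - ⟪γ t - x₀, deriv γ t⟫^2/(2*t₀)) * Real.exp (-‖γ t - x₀‖^2/(4*t₀)))) = 0 := by
  have hTT : ∀ t, ⟪deriv γ t, deriv γ t⟫ = (1:ℝ) := by
    intro t; rw [real_inner_self_eq_norm_sq, hunit]; norm_num
  have hsub : ∀ t, HasDerivAt (fun s => γ s - x₀) (deriv γ t) t :=
    fun t => (hD hγ t).sub_const x₀
  have hτ : ∀ t, HasDerivAt (fun s => ⟪γ s - x₀, deriv γ s⟫)
      (1 + ⟪γ t - x₀, deriv (deriv γ) t⟫) t := by
    intro t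
    have h2 : HasDerivAt (fun s => ⟪γ s - x₀, deriv γ s⟫)
        (⟪γ t - x₀, deriv (deriv γ) t⟫ + ⟪deriv γ t, deriv γ t⟫) t := (hsub t).inner ℝ (hD2 hγ t)
    convert h2 using 1
    rw [hTT t]; ring
  have hg' : ∀ t, HasDerivAt (fun s => Real.exp (-‖γ s - x₀‖^2/(4*t₀)))
      (-(⟪γ t - x₀, deriv γ t⟫/(2*t₀)) * Real.exp (-‖γ t - x₀‖^2/(4*t₀))) t := by
    intro t
    have hq : HasDerivAt (fun s => ⟪γ s - x₀, γ s - x₀⟫)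
        (2 * ⟪γ t - x₀, deriv γ t⟫) t := by
      have h2 : HasDerivAt (fun s => ⟪γ s - x₀, γ s - x₀⟫)
          (⟪γ t - x₀, deriv γ t⟫ + ⟪deriv γ t, γ t - x₀⟫) t := (hsub t).inner ℝ (hsub t)
      convert h2 using 1
      rw [real_inner_comm (deriv γ t) (γ t - x₀)]; ring
    have hq' := ((hq.neg).div_const (4*t₀)).exp
    have efun : (fun s => Real.exp (-‖γ s - x₀‖^2/(4*t₀)))
        = fun s => Real.exp (-⟪γ s - x₀, γ s - x₀⟫/(4*t₀)) := by
      funext s; rw [real_inner_self_eq_norm_sq]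
    rw [efun]
    convert hq' using 1
    · rfl
    rw [Pi.neg_apply, real_inner_self_eq_norm_sq]
    field_simp
    ring
  have hφ : ∀ t, HasDerivAt (fun s => ⟪γ s - x₀, deriv γ s⟫ * Real.exp (-‖γ s - x₀‖^2/(4*t₀)))
      ((1 + ⟪γ t - x₀, deriv (deriv γ) t⟫
        - ⟪γ t - x₀, deriv γ t⟫^2/(2*t₀)) * Real.exp (-‖γ t - x₀‖^2/(4*t₀))) t := by
    intro t
    have h2 : HasDerivAt (fun s => ⟪γ s - x₀, deriv γ s⟫ * Real.exp (-‖γ s - x₀‖^2/(4*t₀)))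
        ((1 + ⟪γ t - x₀, deriv (deriv γ) t⟫) * Real.exp (-‖γ t - x₀‖^2/(4*t₀)) +
          ⟪γ t - x₀, deriv γ t⟫ * (-(⟪γ t - x₀, deriv γ t⟫/(2*t₀)) * Real.exp (-‖γ t - x₀‖^2/(4*t₀)))) t :=
      (hτ t).mul (hg' t)
    convert h2 using 1
    ring
  have hcont : Continuous fun t => ((1 + ⟪γ t - x₀, deriv (deriv γ) t⟫
      - ⟪γ t - x₀, deriv γ t⟫^2/(2*t₀)) * Real.exp (-‖γ t - x₀‖^2/(4*t₀))) := by
    have hc1 : Continuous fun t => γ t - x₀ := hγ.continuous.sub continuous_const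
    have hc2 : Continuous fun t => ⟪γ t - x₀, deriv (deriv γ) t⟫ :=
      hc1.inner (contD (contD hγ)).continuous
    have hc3 : Continuous fun t => ⟪γ t - x₀, deriv γ t⟫ := hc1.inner (contD hγ).continuous
    have hc4 : Continuous fun t => ‖γ t - x₀‖ := hc1.norm
    fun_prop
  have hFTC := intervalIntegral.integral_eq_sub_of_hasDerivAt
    (f := fun s => ⟪γ s - x₀, deriv γ s⟫ * Real.exp (-‖γ s - x₀‖^2/(4*t₀)))
    (fun t _ => hφ t) (hcont.intervalIntegrable 0 ℓ)
  rw [hFTC]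
  have e1 : γ ℓ = γ 0 := by have := hper 0; rwa [zero_add] at this
  have e2 : deriv γ ℓ = deriv γ 0 := by have := periodic_deriv hper 0; rwa [zero_add] at this
  simp only [e1, e2, sub_self]

lemma pointwise_ineq {x H S G : ℝ} (hG : 0 < G) (hHS : H^2 ≤ S) :
    -(S/4) * G ≤ (x^2 - H * x) * G := by
  nlinarith [sq_nonneg (x - H/2), hG.le]


end Aux2

/-- For a smooth closed unit-speed curve, the partial derivative of
`F_{x₀,t₀}` in `t₀` exists and is at least `−(λ(γ)/4)·sup H²`. -/
theorem stmt14 (γ : ℝ → E2) (hγ : ContDiff ℝ (⊤ : ℕ∞) γ)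
    (hunit : ∀ t, ‖deriv γ t‖ = 1)
    (ℓ : ℝ) (hℓ : 0 < ℓ) (hper : ∀ t, γ (t + ℓ) = γ t)
    (x₀ : E2) (t₀ : ℝ) (ht₀ : 0 < t₀) :
    ∃ d : ℝ, HasDerivAt (fun s => Fcur γ ℓ x₀ s) d t₀ ∧
      -(entCur γ ℓ / 4) * sSup (Set.range fun t => curv γ t ^ 2) ≤ d := by
  classical
  -- global curvature bound
  have hAper : ∀ t, deriv (deriv γ) (t + ℓ) = deriv (deriv γ) t :=
    periodic_deriv (periodic_deriv hper)
  have hAcont : Continuous fun t => ‖deriv (deriv γ) t‖ := (contD (contD hγ)).continuous.norm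
  obtain ⟨M, hM⟩ := periodic_bound hℓ hAcont (fun t => by rw [hAper t])
  set K := |M| + 1 with hKdef
  have hK : 0 < K := by positivity
  have hbnd : ∀ t, ‖deriv (deriv γ) t‖ ≤ K := fun t =>
    (hM t).trans (by rw [hKdef]; linarith [le_abs_self M])
  -- entropy set is bounded above
  have hBddEnt : BddAbove {a : ℝ | ∃ x₁ : E2, ∃ t₁ : ℝ, 0 < t₁ ∧ a = Fcur γ ℓ x₁ t₁} := by
    refine ⟨32 * (Nat.ceil (ℓ * K) : ℝ), ?_⟩
    rintro a ⟨x₁, t₁, ht₁, rfl⟩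
    exact Fcur_bound hγ hunit hK hbnd hℓ x₁ ht₁
  have hFle : Fcur γ ℓ x₀ t₀ ≤ entCur γ ℓ :=
    le_csSup hBddEnt ⟨x₀, t₀, ht₀, rfl⟩
  -- sup of curvature squared
  have hBddS : BddAbove (Set.range fun t => curv γ t ^ 2) := by
    obtain ⟨M₂, hM₂⟩ := periodic_bound hℓ ((cont_curv hγ).pow 2)
      (fun t => by show curv γ (t + ℓ) ^ 2 = curv γ t ^ 2; rw [curv_periodic hper t])
    exact ⟨M₂, by rintro a ⟨t, rfl⟩; exact hM₂ t⟩
  set S := sSup (Set.range fun t => curv γ t ^ 2) with hSdef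
  have hSt : ∀ t, curv γ t ^ 2 ≤ S := fun t => le_csSup hBddS ⟨t, rfl⟩
  have hS0 : 0 ≤ S := le_trans (sq_nonneg _) (hSt 0)
  -- continuity facts
  have hcr : Continuous fun t => ‖γ t - x₀‖ := (hγ.continuous.sub continuous_const).norm
  have hgcont : Continuous fun t => Real.exp (-‖γ t - x₀‖ ^ 2 / (4 * t₀)) := by fun_prop
  have hc1cont : Continuous fun t => γ t - x₀ := hγ.continuous.sub continuous_const
  have hcν : Continuous fun t => ⟪γ t - x₀, deriv (deriv γ) t⟫ :=
    hc1cont.inner (contD (contD hγ)).continuous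
  have hcτ : Continuous fun t => ⟪γ t - x₀, deriv γ t⟫ := hc1cont.inner (contD hγ).continuous
  -- the derivative
  have hpos : (0:ℝ) < 4 * π * t₀ := by positivity
  have hPre : HasDerivAt (fun s : ℝ => (4 * π * s) ^ (-(1:ℝ)/2))
      ((-(1:ℝ)/2) * (4 * π * t₀) ^ ((-(1:ℝ)/2) - 1) * (4 * π)) t₀ := by
    have h1 : HasDerivAt (fun s : ℝ => 4 * π * s) (4 * π) t₀ := by
      simpa using (hasDerivAt_id t₀).const_mul (4 * π)
    have h2 := h1.rpow_const (p := -(1:ℝ)/2) (Or.inl hpos.ne')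
    convert h2 using 1
    ring
  have hI := hasDeriv_I hγ x₀ (ℓ := ℓ) ht₀
  have hprod := hPre.mul hI
  set c₀ := (4 * π * t₀) ^ (-(1:ℝ)/2) with hc₀
  set I₀ := ∫ t in (0:ℝ)..ℓ, Real.exp (-‖γ t - x₀‖ ^ 2 / (4 * t₀)) with hI₀
  set D := ∫ t in (0:ℝ)..ℓ, ‖γ t - x₀‖^2/(4*t₀^2) * Real.exp (-‖γ t - x₀‖^2/(4*t₀)) with hD₀
  refine ⟨(-(1:ℝ)/2) * (4 * π * t₀) ^ ((-(1:ℝ)/2) - 1) * (4 * π) * I₀ + c₀ * D, ?_, ?_⟩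
  · have e : (fun s => Fcur γ ℓ x₀ s) = fun s => (4 * π * s) ^ (-(1:ℝ)/2) *
        ∫ t in (0:ℝ)..ℓ, Real.exp (-‖γ t - x₀‖ ^ 2 / (4 * s)) := by
      funext s; rw [Fcur]
    rw [e]
    exact hprod
  · -- lower bound for the derivative
    have hc₁ : (-(1:ℝ)/2) * (4 * π * t₀) ^ ((-(1:ℝ)/2) - 1) * (4 * π) = -(1/(2*t₀)) * c₀ := by
      rw [Real.rpow_sub hpos, Real.rpow_one, hc₀]
      field_simp
    -- integrability
    have ia : IntervalIntegrable
        (fun t => ‖γ t - x₀‖^2/(4*t₀^2) * Real.exp (-‖γ t - x₀‖^2/(4*t₀))) volume 0 ℓ :=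
      (by fun_prop : Continuous fun t =>
        ‖γ t - x₀‖^2/(4*t₀^2) * Real.exp (-‖γ t - x₀‖^2/(4*t₀))).intervalIntegrable _ _
    have ibb : IntervalIntegrable
        (fun t => 1/(2*t₀) * Real.exp (-‖γ t - x₀‖^2/(4*t₀))) volume 0 ℓ :=
      (by fun_prop : Continuous fun t =>
        1/(2*t₀) * Real.exp (-‖γ t - x₀‖^2/(4*t₀))).intervalIntegrable _ _
    have hBcont : Continuous fun t => (1 + ⟪γ t - x₀, deriv (deriv γ) t⟫
        - ⟪γ t - x₀, deriv γ t⟫^2/(2*t₀)) * Real.exp (-‖γ t - x₀‖^2/(4*t₀)) := by fun_prop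
    have ic : IntervalIntegrable
        (fun t => 1/(2*t₀) * ((1 + ⟪γ t - x₀, deriv (deriv γ) t⟫
          - ⟪γ t - x₀, deriv γ t⟫^2/(2*t₀)) * Real.exp (-‖γ t - x₀‖^2/(4*t₀)))) volume 0 ℓ :=
      (continuous_const.mul hBcont).intervalIntegrable _ _
    -- the combined integral identity
    have hibp := ibp hγ hunit hper x₀ ht₀
    have hDW : (∫ t in (0:ℝ)..ℓ,
        (‖γ t - x₀‖^2/(4*t₀^2) * Real.exp (-‖γ t - x₀‖^2/(4*t₀))
          - 1/(2*t₀) * Real.exp (-‖γ t - x₀‖^2/(4*t₀))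
          + 1/(2*t₀) * ((1 + ⟪γ t - x₀, deriv (deriv γ) t⟫
            - ⟪γ t - x₀, deriv γ t⟫^2/(2*t₀)) * Real.exp (-‖γ t - x₀‖^2/(4*t₀)))))
        = D - 1/(2*t₀) * I₀ := by
      rw [intervalIntegral.integral_add (ia.sub ibb) ic,
        intervalIntegral.integral_sub ia ibb,
        intervalIntegral.integral_const_mul, intervalIntegral.integral_const_mul, hibp]
      rw [hI₀, hD₀]
      ring
    -- pointwise lower bound
    have hWlow : ∀ t, -(S/4) * Real.exp (-‖γ t - x₀‖^2/(4*t₀))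
        ≤ (‖γ t - x₀‖^2/(4*t₀^2) * Real.exp (-‖γ t - x₀‖^2/(4*t₀))
          - 1/(2*t₀) * Real.exp (-‖γ t - x₀‖^2/(4*t₀))
          + 1/(2*t₀) * ((1 + ⟪γ t - x₀, deriv (deriv γ) t⟫
            - ⟪γ t - x₀, deriv γ t⟫^2/(2*t₀)) * Real.exp (-‖γ t - x₀‖^2/(4*t₀)))) := by
      intro t
      have hAT := inner_AT hγ hunit t
      have hiA := inner_A γ t (hunit t) hAT (γ t - x₀)
      have hr2 : ‖γ t - x₀‖^2 = ⟪γ t - x₀, deriv γ t⟫^2 + ⟪γ t - x₀, normal γ t⟫^2 :=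
        (pythag γ t (hunit t) (γ t - x₀)).symm
      have e2 : (‖γ t - x₀‖^2/(4*t₀^2) * Real.exp (-‖γ t - x₀‖^2/(4*t₀))
          - 1/(2*t₀) * Real.exp (-‖γ t - x₀‖^2/(4*t₀))
          + 1/(2*t₀) * ((1 + ⟪γ t - x₀, deriv (deriv γ) t⟫
            - ⟪γ t - x₀, deriv γ t⟫^2/(2*t₀)) * Real.exp (-‖γ t - x₀‖^2/(4*t₀))))
          = ((⟪γ t - x₀, normal γ t⟫/(2*t₀))^2
              - curv γ t * (⟪γ t - x₀, normal γ t⟫/(2*t₀)))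
            * Real.exp (-‖γ t - x₀‖^2/(4*t₀)) := by
        rw [hiA, hr2]
        field_simp
        ring
      rw [e2]
      exact pointwise_ineq (Real.exp_pos _) (hSt t)
    -- integrate the bound
    have hmono : -(S/4) * I₀ ≤ D - 1/(2*t₀) * I₀ := by
      rw [← hDW, hI₀, ← intervalIntegral.integral_const_mul]
      apply intervalIntegral.integral_mono_on hℓ.le
        ((continuous_const.mul hgcont).intervalIntegrable _ _)
        ((ia.sub ibb).add ic)
      exact fun t _ => hWlow t
    have hc₀pos : (0:ℝ) < c₀ := Real.rpow_pos_of_pos hpos _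
    have hchain : -(S/4) * Fcur γ ℓ x₀ t₀
        ≤ (-(1:ℝ)/2) * (4 * π * t₀) ^ ((-(1:ℝ)/2) - 1) * (4 * π) * I₀ + c₀ * D := by
      rw [hc₁]
      have := mul_le_mul_of_nonneg_left hmono hc₀pos.le
      rw [Fcur, ← hc₀, ← hI₀]
      nlinarith [this]
    have h8 : (S/4) * Fcur γ ℓ x₀ t₀ ≤ (S/4) * entCur γ ℓ :=
      mul_le_mul_of_nonneg_left hFle (by positivity)
    have e9 : -(entCur γ ℓ / 4) * S = -((S/4) * entCur γ ℓ) := by ring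
    rw [e9]
    nlinarith [hchain, h8]
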